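/- In any instance of the Hospitals/Residents problem with couples in which every couple is separable (i.e., any combination of acceptable individual assignments, including leaving one member unmatched, is acceptable to the couple, with sub-responsive joint preferences), treating the members of each couple as independent single doctors, any matching that is stable for the resulting couples-free Hospitals/Residents instance is also stable for the original instance with couples. -/

import Mathlib

namespace Stmt3

variable {D H : Type}

/-- The set of assignees of hospital `h` in matching `M`. -/
def asg [Fintype D] [DecidableEq H] (M : D → Option H) (h : H) : Finset D :=
  Finset.univ.filter (fun d => M d = some h)

/-- Hospital `h` is undersubscribed, or prefers doctor `c` to some current assignee
(excluding `excl`, if given). -/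
def canImprove [Fintype D] [DecidableEq D] [DecidableEq H] (cap : H → ℕ)
    (hPref : H → D → D → Prop) (M : D → Option H) (h : H) (c : D) (excl : Option D) : Prop :=
  (asg M h).card < cap h ∨ ∃ r ∈ asg M h, (∀ x, excl = some x → r ≠ x) ∧ hPref h c r

/-- The McDermid–Manlove blocking condition for a couple `(c1, c2)` together with an
acceptable pair `p` of (optional) hospitals, given that the couple prefers `p` to its
current assignment. -/
def coupleBlockPair [Fintype D] [DecidableEq D] [DecidableEq H]
    (cap : H → ℕ) (hPref : H → D → D → Prop)
    (M : D → Option H) (c1 c2 : D) : Option H × Option H → Prop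
  | (some hj, some hk) =>
      (M c1 = some hj ∧ canImprove cap hPref M hk c2 (some c1)) ∨
      (M c2 = some hk ∧ canImprove cap hPref M hj c1 (some c2)) ∨
      (M c1 ≠ some hj ∧ M c2 ≠ some hk ∧
        ((hj ≠ hk ∧ canImprove cap hPref M hj c1 none ∧ canImprove cap hPref M hk c2 none) ∨
         (hj = hk ∧ 2 ≤ cap hj - (asg M hj).card) ∨
         (hj = hk ∧ cap hj - (asg M hj).card = 1 ∧
            ∃ r ∈ asg M hj, hPref hj c1 r ∨ hPref hj c2 r) ∨
         (hj = hk ∧ (asg M hj).card = cap hj ∧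
            ∃ r ∈ asg M hj, ∃ s ∈ asg M hj, r ≠ s ∧ hPref hj c1 r ∧ hPref hj c2 s)))
  | (some hj, none) => M c1 = some hj ∨ canImprove cap hPref M hj c1 none
  | (none, some hk) => M c2 = some hk ∨ canImprove cap hPref M hk c2 none
  | (none, none) => False

/-- for a separable couple with sub-responsive (coordinatewise induced)
joint preferences, a matching that is stable when all doctors are treated as singles
admits no blocking coalition in the instance with the couple:
no single doctor blocks, and the couple blocks with no acceptable pair. -/
theorem stmt_3 [Fintype D] [DecidableEq D] [DecidableEq H]
    (cap : H → ℕ) (acc : D → H → Prop)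
    (hPref : H → D → D → Prop)
    -- individual strict preferences over `Option H` (being unmatched is an outcome)
    (ip : D → Option H → Option H → Prop)
    (iptrans : ∀ d, Transitive (ip d))
    (ipirr : ∀ d o, ¬ ip d o o)
    (iptrich : ∀ d o o', o = o' ∨ ip d o o' ∨ ip d o' o)
    -- acceptable hospitals are preferred to being unmatched
    (iprat : ∀ d h, acc d h → ip d (some h) none)
    (M : D → Option H)
    -- feasibility
    (hfeas1 : ∀ d h, M d = some h → acc d h)
    (hfeas2 : ∀ h, (asg M h).card ≤ cap h)
    -- HR-stability of M when every doctor (including couple members) is treated as single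
    (hstab : ∀ d h, acc d h → ip d (some h) (M d) → ¬ canImprove cap hPref M h d none)
    -- the couple
    (c1 c2 : D) (hne : c1 ≠ c2)
    -- joint strict preference of the couple
    (jp : Option H × Option H → Option H × Option H → Prop)
    (jptrans : Transitive jp)
    (jpirr : ∀ p, ¬ jp p p)
    -- separable / sub-complete acceptable set: any combination of individually
    -- acceptable assignments (including one member unmatched) is acceptable
    (AC : Set (Option H × Option H))
    (hAC : AC = {p | (∀ h, p.1 = some h → acc c1 h) ∧ (∀ h, p.2 = some h → acc c2 h)
                  ∧ p ≠ (none, none)})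
    -- sub-responsiveness: the joint order is induced coordinatewise by ip
    (hresp1 : ∀ a b b', jp (a, b) (a, b') ↔ ip c2 b b')
    (hresp2 : ∀ a a' b, jp (a, b) (a', b) ↔ ip c1 a a') :
    (∀ d h, acc d h → ip d (some h) (M d) → ¬ canImprove cap hPref M h d none) ∧
    (∀ p ∈ AC, jp p (M c1, M c2) → ¬ coupleBlockPair cap hPref M c1 c2 p) := by
  have keyA : ∀ a b a' b', jp (a, b) (a', b') → ip c1 a a' ∨ ip c2 b b' := by
    intro a b a' b' h
    by_contra hc
    push_neg at hc
    obtain ⟨h1, h2⟩ := hc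
    rcases iptrich c1 a a' with rfl | h1' | h1'
    · rcases iptrich c2 b b' with rfl | h2' | h2'
      · exact jpirr _ h
      · exact h2 h2'
      · exact jpirr _ (jptrans h ((hresp1 a b' b).mpr h2'))
    · exact h1 h1'
    · rcases iptrich c2 b b' with rfl | h2' | h2'
      · exact jpirr _ (jptrans h ((hresp2 a' a b).mpr h1'))
      · exact h2 h2'
      · exact jpirr _ (jptrans (jptrans h ((hresp1 a' b' b).mpr h2')) ((hresp2 a' a b).mpr h1'))
  have keyB : ∀ d, ¬ ip d none (M d) := by
    intro d h
    cases hM : M d with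
    | none => rw [hM] at h; exact ipirr d none h
    | some h' =>
        rw [hM] at h
        exact ipirr d none (iptrans d h (iprat d h' (hfeas1 d h' hM)))
  have keyC : ∀ h c x, canImprove cap hPref M h c (some x) → canImprove cap hPref M h c none := by
    rintro h c x (hu | ⟨r, hr, _, hp⟩)
    · exact Or.inl hu
    · exact Or.inr ⟨r, hr, ⟨fun y hy => by simp at hy, hp⟩⟩
  refine ⟨hstab, ?_⟩
  rintro ⟨p1, p2⟩ hp hjp hblock
  rw [hAC] at hp
  obtain ⟨hacc1, hacc2, hpne⟩ := hp
  simp only at hacc1 hacc2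
  cases p1 with
  | none =>
    cases p2 with
    | none => exact hpne rfl
    | some hk =>
      -- couple's second member alone blocks
      have hacc : acc c2 hk := hacc2 hk rfl
      rcases keyA none hk (M c1) (M c2) hjp with hip | hip
      · exact keyB c1 hip
      · have hnci := hstab c2 hk hacc hip
        simp only [coupleBlockPair] at hblock
        rcases hblock with hM2 | hci
        · rw [hM2] at hip; exact ipirr c2 _ hip
        · exact hnci hci
  | some hj =>
    cases p2 with
    | none =>
      have hacc : acc c1 hj := hacc1 hj rfl
      rcases keyA hj none (M c1) (M c2) hjp with hip | hip
      · have hnci := hstab c1 hj hacc hip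
        simp only [coupleBlockPair] at hblock
        rcases hblock with hM1 | hci
        · rw [hM1] at hip; exact ipirr c1 _ hip
        · exact hnci hci
      · exact keyB c2 hip
    | some hk =>
      have hacc1' : acc c1 hj := hacc1 hj rfl
      have hacc2' : acc c2 hk := hacc2 hk rfl
      simp only [coupleBlockPair] at hblock
      rcases hblock with ⟨hM1, hci⟩ | ⟨hM2, hci⟩ | ⟨hne1, hne2, hsub⟩
      · -- M c1 = some hj: c2 alone blocks
        rw [hM1] at hjp
        have hip2 := (hresp1 (some hj) (some hk) (M c2)).mp hjp
        exact hstab c2 hk hacc2' hip2 (keyC hk c2 c1 hci)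
      · rw [hM2] at hjp
        have hip1 := (hresp2 (some hj) (M c1) (some hk)).mp hjp
        exact hstab c1 hj hacc1' hip1 (keyC hj c1 c2 hci)
      · rcases keyA (some hj) (some hk) (M c1) (M c2) hjp with hip | hip
        · have hnci := hstab c1 hj hacc1' hip
          rcases hsub with ⟨_, hc1, _⟩ | ⟨rfl, h2le⟩ | ⟨rfl, hcap1, _⟩ |
              ⟨rfl, _, r, hr, s, hs, hrs, hp1, hp2⟩
          · exact hnci hc1
          · have := hfeas2 hj
            exact hnci (Or.inl (by omega))
          · have := hfeas2 hj
            exact hnci (Or.inl (by omega))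
          · exact hnci (Or.inr ⟨r, hr, ⟨fun y hy => by simp at hy, hp1⟩⟩)
        · have hnci := hstab c2 hk hacc2' hip
          rcases hsub with ⟨_, _, hc2⟩ | ⟨rfl, h2le⟩ | ⟨rfl, hcap1, _⟩ |
              ⟨rfl, _, r, hr, s, hs, hrs, hp1, hp2⟩
          · exact hnci hc2
          · have := hfeas2 hj
            exact hnci (Or.inl (by omega))
          · have := hfeas2 hj
            exact hnci (Or.inl (by omega))
          · exact hnci (Or.inr ⟨s, hs, ⟨fun y hy => by simp at hy, hp2⟩⟩)

end Stmt3
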